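/- Every subring of the rational numbers ℚ (containing 1) is of the form ℚ_π, the subring generated by the set {1/p : p ∈ π} for some set π of primes. -/
import Mathlib

/-- Key lemma: if `(n:ℚ)⁻¹ ∈ C` with `n > 0`, then `(n:ℚ)⁻¹` lies in the closure of
the set of inverses of primes whose inverses lie in `C`. -/
lemma inv_nat_mem_closure (C : Subring ℚ) :
    ∀ n : ℕ, 0 < n → ((n : ℚ))⁻¹ ∈ C →
      ((n : ℚ))⁻¹ ∈ Subring.closure
        {x : ℚ | ∃ p ∈ {p : ℕ | p.Prime ∧ ((p : ℚ))⁻¹ ∈ C}, x = ((p : ℚ))⁻¹} := by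
  intro n
  induction n using Nat.strong_induction_on with
  | _ n ih =>
    intro hn hmem
    rcases eq_or_ne n 1 with rfl | hne
    · simpa using Subring.one_mem _
    · set p := n.minFac with hp
      have hpprime : p.Prime := Nat.minFac_prime hne
      have hpdvd : p ∣ n := Nat.minFac_dvd n
      obtain ⟨m, hm⟩ := hpdvd
      have hm0 : 0 < m := by
        rcases Nat.eq_zero_or_pos m with h0 | h0
        · subst h0; simp at hm; omega
        · exact h0
      have hpQ : ((p : ℚ)) ≠ 0 := Nat.cast_ne_zero.mpr hpprime.pos.ne'
      have hmQ : ((m : ℚ)) ≠ 0 := Nat.cast_ne_zero.mpr hm0.ne'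
      have hsplit : ((n : ℚ))⁻¹ = ((p : ℚ))⁻¹ * ((m : ℚ))⁻¹ := by
        rw [hm]; push_cast; rw [mul_inv]
      -- (p:ℚ)⁻¹ ∈ C
      have hpC : ((p : ℚ))⁻¹ ∈ C := by
        have : ((p : ℚ))⁻¹ = (m : ℚ) * ((n : ℚ))⁻¹ := by
          rw [hsplit]; field_simp
        rw [this]
        exact C.mul_mem (natCast_mem C m) hmem
      -- (m:ℚ)⁻¹ ∈ C
      have hmC : ((m : ℚ))⁻¹ ∈ C := by
        have : ((m : ℚ))⁻¹ = (p : ℚ) * ((n : ℚ))⁻¹ := by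
          rw [hsplit]; field_simp
        rw [this]
        exact C.mul_mem (natCast_mem C p) hmem
      have hmlt : m < n := by
        have hp2 : 2 ≤ p := hpprime.two_le
        calc m < 2 * m := by omega
          _ ≤ p * m := Nat.mul_le_mul_right m hp2
          _ = n := hm.symm
      have hpcl : ((p : ℚ))⁻¹ ∈ Subring.closure
          {x : ℚ | ∃ p ∈ {p : ℕ | p.Prime ∧ ((p : ℚ))⁻¹ ∈ C}, x = ((p : ℚ))⁻¹} :=
        Subring.subset_closure ⟨p, ⟨hpprime, hpC⟩, rfl⟩
      have hmcl := ih m hmlt hm0 hmC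
      rw [hsplit]
      exact Subring.mul_mem _ hpcl hmcl

theorem every_subring_of_rat_eq_Qpi (C : Subring ℚ) :
    ∃ π : Set ℕ, (∀ p ∈ π, Nat.Prime p) ∧
      C = Subring.closure {x : ℚ | ∃ p ∈ π, x = ((p : ℚ))⁻¹} := by
  refine ⟨{p : ℕ | p.Prime ∧ ((p : ℚ))⁻¹ ∈ C}, fun p hp => hp.1, ?_⟩
  apply le_antisymm
  · intro x hx
    -- 1/x.den ∈ C via Bezout
    have hden : ((x.den : ℚ))⁻¹ ∈ C := by
      have hcop : Int.gcd x.num (x.den : ℤ) = 1 := x.reduced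
      have hbez : (1 : ℤ) = x.num * Int.gcdA x.num x.den + x.den * Int.gcdB x.num x.den := by
        have := Int.gcd_eq_gcd_ab x.num (x.den : ℤ)
        rw [hcop] at this
        exact_mod_cast this
      have hdQ : ((x.den : ℚ)) ≠ 0 := Nat.cast_ne_zero.mpr x.den_nz
      have hxden : x * (x.den : ℚ) = (x.num : ℚ) := Rat.mul_den_eq_num x
      have hb : (1 : ℚ) = (x.num : ℚ) * (Int.gcdA x.num x.den : ℚ)
          + (x.den : ℚ) * (Int.gcdB x.num x.den : ℚ) := by exact_mod_cast hbez
      have key : (Int.gcdA x.num x.den : ℚ) * x + (Int.gcdB x.num x.den : ℚ)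
          = ((x.den : ℚ))⁻¹ := by
        refine eq_inv_of_mul_eq_one_left ?_
        linear_combination (Int.gcdA x.num x.den : ℚ) * hxden - hb
      rw [← key]
      exact C.add_mem (C.mul_mem (intCast_mem C _) hx) (intCast_mem C _)
    have hcl := inv_nat_mem_closure C x.den x.pos hden
    have hxeq : x = (x.num : ℚ) * ((x.den : ℚ))⁻¹ := by
      rw [← div_eq_mul_inv, Rat.num_div_den]
    rw [hxeq]
    exact Subring.mul_mem _ (intCast_mem _ _) hcl
  · rw [Subring.closure_le]
    rintro y ⟨p, hp, rfl⟩
    exact hp.2
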